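/- Let U take values in a finite set with P(U=u)>0, let w : supp(U) → [−1,1] and τ : supp(U) → ℝ with |τ(u) − τ(u')| ≤ r for all u, u'. Suppose E[w(U)] > 0. Then for the Wald-type quantity W = E[τ(U)w(U)]/E[w(U)] and any fixed u₀, |W − τ(u₀)| ≤ r · E[|w(U)|]/E[w(U)]. In particular if w ≥ 0 everywhere then |W − τ(u₀)| ≤ r. -/

import Mathlib

open Finset
open scoped Classical

/-- Probability of an event `A` under mass function `p` on a finite sample space. -/
noncomputable def prb {Ω : Type*} [Fintype Ω] (p : Ω → ℝ) (A : Ω → Prop) : ℝ :=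
  ∑ ω, if A ω then p ω else 0

/-- Expectation of a real random variable `X` under mass function `p`. -/
noncomputable def exv {Ω : Type*} [Fintype Ω] (p : Ω → ℝ) (X : Ω → ℝ) : ℝ :=
  ∑ ω, p ω * X ω

/-- Conditional probability `P(A | B)`. -/
noncomputable def cpr {Ω : Type*} [Fintype Ω] (p : Ω → ℝ) (A B : Ω → Prop) : ℝ :=
  prb p (fun ω => A ω ∧ B ω) / prb p B

/-- Conditional expectation `E[X | B]`. -/
noncomputable def cex {Ω : Type*} [Fintype Ω] (p : Ω → ℝ) (X : Ω → ℝ) (B : Ω → Prop) : ℝ :=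
  (∑ ω, if B ω then p ω * X ω else 0) / prb p B

/-- deviation of the Wald-type weighted average from any stratum effect
is bounded by r·E[|w|]/E[w]; under monotonicity this is at most r. -/
theorem stmt18 {ι : Type*} [Fintype ι]
    (q w τ : ι → ℝ)
    (hq : ∀ u, 0 < q u) (hqsum : ∑ u, q u = 1)
    (hwb : ∀ u, -1 ≤ w u ∧ w u ≤ 1)
    (r : ℝ) (hr : 0 ≤ r)
    (hrange : ∀ u u', |τ u - τ u'| ≤ r)
    (hEw : 0 < ∑ u, w u * q u)
    (u₀ : ι) :
    |(∑ u, τ u * w u * q u) / (∑ u, w u * q u) - τ u₀| ≤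
        r * (∑ u, |w u| * q u) / (∑ u, w u * q u) ∧
      ((∀ u, 0 ≤ w u) →
        |(∑ u, τ u * w u * q u) / (∑ u, w u * q u) - τ u₀| ≤ r) := by
  set S := ∑ u, w u * q u with hS
  have hS0 : S ≠ 0 := ne_of_gt hEw
  have key : (∑ u, τ u * w u * q u) / S - τ u₀
      = (∑ u, (τ u - τ u₀) * w u * q u) / S := by
    rw [div_sub' hS0]
    congr 1
    rw [hS, Finset.sum_mul, ← Finset.sum_sub_distrib]
    exact Finset.sum_congr rfl (fun u _ => by ring)
  have hnum : |∑ u, (τ u - τ u₀) * w u * q u| ≤ r * ∑ u, |w u| * q u := by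
    calc |∑ u, (τ u - τ u₀) * w u * q u| ≤ ∑ u, |(τ u - τ u₀) * w u * q u| :=
          Finset.abs_sum_le_sum_abs _ _
      _ ≤ ∑ u, r * (|w u| * q u) := by
          apply Finset.sum_le_sum
          intro u _
          rw [abs_mul, abs_mul, abs_of_pos (hq u), ← mul_assoc]
          exact mul_le_mul_of_nonneg_right
            (mul_le_mul_of_nonneg_right (hrange u u₀) (abs_nonneg _)) (hq u).le
      _ = r * ∑ u, |w u| * q u := by rw [Finset.mul_sum]
  have hmain : |(∑ u, τ u * w u * q u) / S - τ u₀| ≤ r * (∑ u, |w u| * q u) / S := by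
    rw [key, abs_div, abs_of_pos hEw]
    exact div_le_div_of_nonneg_right hnum hEw.le
  refine ⟨hmain, fun hw => ?_⟩
  have hSe : (∑ u, |w u| * q u) = S := by
    exact Finset.sum_congr rfl (fun u _ => by rw [abs_of_nonneg (hw u)])
  calc _ ≤ r * (∑ u, |w u| * q u) / S := hmain
    _ = r := by rw [hSe]; field_simp
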